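/- Let R be a commutative ring whose prime spectrum Spec(R) is a Noetherian topological space. Then Spec(R[x]) is also a Noetherian topological space. Consequently, for any n, Spec(R[x_1,...,x_n]) is Noetherian. -/

import Mathlib

open Ideal Polynomial TopologicalSpace


private lemma pseudoDiv {S : Type*} [CommRing S] (f : S[X]) (hf : f ≠ 0) (g : S[X]) :
    ∃ (s : ℕ) (q r : S[X]), C f.leadingCoeff ^ s * g = f * q + r ∧ r.degree < f.degree := by
  suffices H : ∀ n : ℕ, ∀ g : S[X], g.natDegree ≤ n →
      ∃ (s : ℕ) (q r : S[X]), C f.leadingCoeff ^ s * g = f * q + r ∧ r.degree < f.degree by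
    exact H g.natDegree g le_rfl
  intro n
  induction n using Nat.strong_induction_on with
  | _ n IH =>
  intro g hgn
  by_cases hlt : g.degree < f.degree
  · exact ⟨0, 0, g, by ring, hlt⟩
  push_neg at hlt
  have hg : g ≠ 0 := fun h => hf (by
    rw [h, degree_zero, le_bot_iff, degree_eq_bot] at hlt; exact hlt)
  have hmn : f.natDegree ≤ g.natDegree := natDegree_le_natDegree hlt
  set m := f.natDegree with hm
  set N := g.natDegree with hN
  set g' : S[X] := C f.leadingCoeff * g - C g.leadingCoeff * (X ^ (N - m) * f) with hg'
  have hdeg' : g'.degree < (N : WithBot ℕ) := by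
    rw [degree_lt_iff_coeff_zero]
    intro k hk
    have hk' : (N : ℕ) ≤ k := by exact_mod_cast hk
    have h1 : (X ^ (N - m) * f).coeff k = if k = N then f.leadingCoeff else 0 := by
      rcases eq_or_lt_of_le hk' with rfl | hkn
      · have hc := coeff_X_pow_mul f (N - m) m
        rw [Nat.add_sub_cancel' hmn] at hc
        rw [if_pos rfl, hc]; rfl
      · rw [if_neg (by omega)]
        apply coeff_eq_zero_of_natDegree_lt
        calc (X ^ (N - m) * f).natDegree ≤ (X ^ (N - m) : S[X]).natDegree + f.natDegree :=
              natDegree_mul_le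
          _ ≤ (N - m) + m := Nat.add_le_add (natDegree_X_pow_le _) le_rfl
          _ < k := by omega
    have h2 : g.coeff k = if k = N then g.leadingCoeff else 0 := by
      rcases eq_or_lt_of_le hk' with rfl | hkn
      · rw [if_pos rfl]; rfl
      · rw [if_neg (by omega)]
        exact coeff_eq_zero_of_natDegree_lt (by omega)
    simp only [hg', coeff_sub, coeff_C_mul, h1, h2]
    split <;> ring
  have hgeq : C f.leadingCoeff * g = f * (C g.leadingCoeff * X ^ (N - m)) + g' := by
    rw [hg']; ring
  by_cases hg'0 : g' = 0
  · exact ⟨1, C g.leadingCoeff * X ^ (N - m), 0, by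
      rw [pow_one, hgeq, hg'0, add_zero], by
      simpa using Ne.bot_lt (fun h => hf (degree_eq_bot.mp h))⟩
  · have hlt' : g'.natDegree < n := by
      have := (natDegree_lt_iff_degree_lt hg'0).mpr hdeg'
      omega
    obtain ⟨s, q, r, heq, hdr⟩ := IH g'.natDegree hlt' g' le_rfl
    refine ⟨s + 1, q + C f.leadingCoeff ^ s * (C g.leadingCoeff * X ^ (N - m)), r, ?_, hdr⟩
    rw [pow_succ, mul_assoc, hgeq, mul_add, heq]
    ring


/-- Every ideal has a finitely generated ideal with the same radical. -/
private def RadFG (A : Type*) [CommRing A] : Prop :=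
  ∀ I : Ideal A, ∃ J : Ideal A, J.FG ∧ J.radical = I.radical

private lemma noetherianSpace_iff_radFG (A : Type*) [CommRing A] :
    NoetherianSpace (PrimeSpectrum A) ↔ RadFG A := by
  constructor
  · intro h I
    have hU : IsCompact ((PrimeSpectrum.zeroLocus (I : Set A))ᶜ) :=
      NoetherianSpace.isCompact _
    have hO : IsOpen ((PrimeSpectrum.zeroLocus (I : Set A))ᶜ) :=
      (PrimeSpectrum.isClosed_zeroLocus _).isOpen_compl
    obtain ⟨J, hJfg, hJ⟩ := PrimeSpectrum.isCompact_isOpen_iff_ideal.mp ⟨hU, hO⟩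
    exact ⟨J, hJfg, PrimeSpectrum.zeroLocus_eq_iff.mp (compl_injective hJ)⟩
  · intro h
    rw [TopologicalSpace.noetherianSpace_iff_opens]
    intro s
    obtain ⟨t, ht⟩ := (PrimeSpectrum.isOpen_iff (s : Set (PrimeSpectrum A))).mp s.isOpen
    obtain ⟨J, hJfg, hJr⟩ := h (Ideal.span t)
    refine (PrimeSpectrum.isCompact_isOpen_iff_ideal.mpr ⟨J, hJfg, ?_⟩).1
    have h1 : PrimeSpectrum.zeroLocus (J : Set A) = (s : Set (PrimeSpectrum A))ᶜ := by
      rw [PrimeSpectrum.zeroLocus_eq_iff.mpr hJr, PrimeSpectrum.zeroLocus_span, ← ht]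
    rw [h1, compl_compl]

private lemma radFG_of_ringEquiv {A B : Type*} [CommRing A] [CommRing B] (e : A ≃+* B)
    (h : NoetherianSpace (PrimeSpectrum A)) : NoetherianSpace (PrimeSpectrum B) := by
  refine TopologicalSpace.noetherianSpace_of_surjective
    (PrimeSpectrum.comap (e.symm : B →+* A)) (PrimeSpectrum.continuous_comap _) ?_
  intro y
  refine ⟨PrimeSpectrum.comap (e : A →+* B) y, ?_⟩
  have : (PrimeSpectrum.comap ((e.symm : B →+* A))) ∘ (PrimeSpectrum.comap (e : A →+* B))
      = PrimeSpectrum.comap (((e : A →+* B)).comp (e.symm : B →+* A)) := by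
    rw [PrimeSpectrum.comap_comp]
  have h2 : ((e : A →+* B)).comp (e.symm : B →+* A) = RingHom.id B := by
    ext x; simp
  calc (PrimeSpectrum.comap (e.symm : B →+* A)) ((PrimeSpectrum.comap (e : A →+* B)) y)
      = PrimeSpectrum.comap (((e : A →+* B)).comp (e.symm : B →+* A)) y := congrFun this y
    _ = y := by rw [h2, PrimeSpectrum.comap_id]


/-- If every prime is the radical of a f.g. ideal... via Zorn: a maximal bad ideal is prime. -/
private lemma exists_chain_member {A : Type*} [CommRing A] {c : Set (Ideal A)}
    (hchain : IsChain (· ≤ ·) c) {y : Ideal A} (hy : y ∈ c) (u : Finset A)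
    (h : ∀ x ∈ (u : Set A), ∃ z ∈ c, x ∈ z.radical) :
    ∃ z ∈ c, ∀ x ∈ (u : Set A), x ∈ z.radical := by
  classical
  induction u using Finset.induction_on with
  | empty => exact ⟨y, hy, by simp⟩
  | @insert a v ha ih =>
    obtain ⟨z₁, hz₁, hz₁'⟩ := ih (fun x hx => h x (by simp [hx]))
    obtain ⟨z₂, hz₂, hz₂'⟩ := h a (by simp)
    obtain ⟨z₃, hz₃, h₁₃, h₂₃⟩ := hchain.directedOn z₁ hz₁ z₂ hz₂
    refine ⟨z₃, hz₃, ?_⟩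
    intro x hx
    rcases Finset.mem_insert.mp hx with rfl | hx
    · exact Ideal.radical_mono h₂₃ hz₂'
    · exact Ideal.radical_mono h₁₃ (hz₁' x hx)

private lemma exists_maximal_bad {A : Type*} [CommRing A] (h : ¬ RadFG A) :
    ∃ M : Ideal A, M.IsPrime ∧ M.radical = M ∧
      (∀ J : Ideal A, J.FG → J.radical ≠ M.radical) ∧
      (∀ I : Ideal A, M < I → ∃ J : Ideal A, J.FG ∧ J.radical = I.radical) := by
  simp only [RadFG, not_forall, not_exists, not_and] at h
  obtain ⟨I₀, hI₀⟩ := h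
  set S : Set (Ideal A) := {I | ∀ J : Ideal A, J.FG → J.radical ≠ I.radical} with hS
  have hzorn : ∀ c ⊆ S, IsChain (· ≤ ·) c → ∀ y ∈ c, ∃ ub ∈ S, ∀ z ∈ c, z ≤ ub := by
    intro c hcS hchain y hy
    refine ⟨sSup c, ?_, fun z hz => le_sSup hz⟩
    intro J hJfg hJrad
    obtain ⟨u, hu⟩ := hJfg
    -- every generator has a power in some member of the chain
    have hgen : ∀ x ∈ (u : Set A), ∃ z ∈ c, x ∈ z.radical := by
      intro x hx
      have hxJ : x ∈ J.radical := by
        rw [← hu]; exact Ideal.le_radical (Ideal.subset_span hx)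
      rw [hJrad] at hxJ
      obtain ⟨n, hn⟩ := hxJ
      obtain ⟨z, hz, hxz⟩ := (Submodule.mem_sSup_of_directed ⟨y, hy⟩
        (hchain.directedOn)).mp hn
      exact ⟨z, hz, ⟨n, hxz⟩⟩
    obtain ⟨z, hzc, hz⟩ := exists_chain_member hchain hy u hgen
    have hJz : J.radical ≤ z.radical := by
      rw [← hu]
      calc (Ideal.span (u : Set A)).radical ≤ (z.radical).radical :=
            Ideal.radical_mono (Ideal.span_le.mpr hz)
        _ = z.radical := Ideal.radical_idem z
    have hzJ : z.radical ≤ J.radical := by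
      rw [hJrad]; exact Ideal.radical_mono (le_sSup hzc)
    exact hcS hzc J ⟨u, hu⟩ (le_antisymm hJz hzJ)
  obtain ⟨M, _, hMS, hMmax⟩ := zorn_le_nonempty₀ S hzorn I₀ hI₀
  -- M is radical
  have hMrad : M.radical = M := by
    refine le_antisymm (hMmax ?_ Ideal.le_radical) Ideal.le_radical
    intro J hJfg hJ
    exact hMS J hJfg (by rwa [M.radical_idem] at hJ)
  have hgood : ∀ I : Ideal A, M < I → ∃ J : Ideal A, J.FG ∧ J.radical = I.radical := by
    intro I hMI
    by_contra hbad
    simp only [not_exists, not_and] at hbad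
    exact absurd (hMmax (fun J hJfg => hbad J hJfg) hMI.le) (not_le_of_gt hMI)
  -- M is prime
  have hMtop : M ≠ ⊤ := by
    intro hM
    exact hMS ⊤ ⟨{1}, by simp [Ideal.span_singleton_one]⟩ (by rw [hM])
  have hMprime : M.IsPrime := by
    rw [Ideal.isPrime_iff]
    refine ⟨hMtop, ?_⟩
    intro a b hab
    by_contra hcon
    push_neg at hcon
    obtain ⟨ha, hb⟩ := hcon
    have hlta : M < M ⊔ Ideal.span {a} :=
      lt_of_le_of_ne le_sup_left (fun hEq => ha (hEq ▸ Ideal.mem_sup_right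
        (Ideal.mem_span_singleton_self a)))
    have hltb : M < M ⊔ Ideal.span {b} :=
      lt_of_le_of_ne le_sup_left (fun hEq => hb (hEq ▸ Ideal.mem_sup_right
        (Ideal.mem_span_singleton_self b)))
    obtain ⟨J₁, hJ₁fg, hJ₁⟩ := hgood _ hlta
    obtain ⟨J₂, hJ₂fg, hJ₂⟩ := hgood _ hltb
    refine hMS (J₁ * J₂) (Submodule.FG.mul hJ₁fg hJ₂fg) ?_
    rw [Ideal.radical_mul, hJ₁, hJ₂]
    apply le_antisymm
    · rintro x ⟨⟨n, hn⟩, ⟨k, hk⟩⟩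
      refine ⟨n + k, ?_⟩
      rw [pow_add]
      obtain ⟨m₁, hm₁, r₁, hr₁, hxn⟩ := Submodule.mem_sup.mp hn
      obtain ⟨m₂, hm₂, r₂, hr₂, hxk⟩ := Submodule.mem_sup.mp hk
      obtain ⟨t₁, rfl⟩ := Ideal.mem_span_singleton'.mp hr₁
      obtain ⟨t₂, rfl⟩ := Ideal.mem_span_singleton'.mp hr₂
      rw [← hxn, ← hxk]
      have : (m₁ + t₁ * a) * (m₂ + t₂ * b)
          = m₁ * (m₂ + t₂ * b) + (t₁ * m₂) * a + (t₁ * t₂) * (a * b) := by ring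
      rw [this]
      exact add_mem (add_mem (M.mul_mem_right _ hm₁) (M.mul_mem_right _
        (M.mul_mem_left _ hm₂))) (M.mul_mem_left _ hab)
    · exact le_inf (Ideal.radical_mono le_sup_left) (Ideal.radical_mono le_sup_left)
  exact ⟨M, hMprime, hMrad, hMS, hgood⟩

private lemma radFG_polynomial {R : Type*} [CommRing R] (hR : RadFG R) : RadFG (Polynomial R) := by
  classical
  by_contra hbad
  obtain ⟨M, hMprime, hMrad, hMS, hgood⟩ := exists_maximal_bad hbad
  set m : Ideal R := M.comap (C : R →+* R[X]) with hm
  have hmprime : m.IsPrime := hMprime.comap _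
  obtain ⟨A, hAfg, hArad⟩ := hR m
  have hAm : A.radical = m := by rw [hArad, hmprime.radical]
  have hAleM : Ideal.map (C : R →+* R[X]) A ≤ M := by
    rw [Ideal.map_le_iff_le_comap, ← hm]
    exact le_trans Ideal.le_radical (le_of_eq hAm)
  by_cases hcase : M ≤ Ideal.map (C : R →+* R[X]) m
  · apply hMS (A.map (C : R →+* R[X])) (hAfg.map _)
    apply le_antisymm (Ideal.radical_mono hAleM)
    have hMle : M ≤ (A.map (C : R →+* R[X])).radical := by
      intro g hg
      have hco : ∀ n, g.coeff n ∈ m := Ideal.mem_map_C_iff.mp (hcase hg)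
      have hcoeff : ∀ n, (C (g.coeff n) : R[X]) ∈ (A.map (C : R →+* R[X])).radical := by
        intro n
        have hcr : g.coeff n ∈ A.radical := by rw [hAm]; exact hco n
        obtain ⟨k, hk⟩ := hcr
        exact ⟨k, by rw [← map_pow]; exact Ideal.mem_map_of_mem _ hk⟩
      have hmem : g ∈ Ideal.map (C : R →+* R[X])
          (((A.map (C : R →+* R[X])).radical).comap (C : R →+* R[X])) :=
        Ideal.mem_map_C_iff.mpr fun n => Ideal.mem_comap.mpr (hcoeff n)
      exact Ideal.map_comap_le hmem
    calc M.radical ≤ ((A.map (C : R →+* R[X])).radical).radical := Ideal.radical_mono hMle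
      _ = _ := Ideal.radical_idem _
  · obtain ⟨f₀, hf₀M, hf₀⟩ := SetLike.not_le_iff_exists.mp hcase
    set φ : R[X] →+* (R ⧸ m)[X] := Polynomial.mapRingHom (Ideal.Quotient.mk m) with hφ
    have hφsurj : Function.Surjective φ :=
      Polynomial.map_surjective _ Ideal.Quotient.mk_surjective
    have hker : ∀ g : R[X], φ g = 0 ↔ g ∈ Ideal.map (C : R →+* R[X]) m := by
      intro g
      rw [Ideal.mem_map_C_iff]
      constructor
      · intro h n
        have h2 := congrArg (fun p => Polynomial.coeff p n) h
        simpa [hφ, Polynomial.coeff_map, Ideal.Quotient.eq_zero_iff_mem] using h2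
      · intro h
        ext n
        simp only [hφ, Polynomial.coe_mapRingHom, Polynomial.coeff_map, Polynomial.coeff_zero,
          Ideal.Quotient.eq_zero_iff_mem]
        exact h n
    set T : Set ℕ := {n | ∃ g ∈ M, φ g ≠ 0 ∧ (φ g).natDegree = n} with hT
    have hTne : T.Nonempty :=
      ⟨(φ f₀).natDegree, f₀, hf₀M, fun h => hf₀ ((hker f₀).mp h), rfl⟩
    obtain ⟨f, hfM, hfne, hfdeg⟩ := Nat.sInf_mem hTne
    set d := sInf T with hd
    have hmin : ∀ g ∈ M, φ g ≠ 0 → d ≤ (φ g).natDegree := fun g hg hgne =>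
      Nat.sInf_le ⟨g, hg, hgne, rfl⟩
    set b := f.coeff d with hb
    have hlead : (φ f).leadingCoeff = Ideal.Quotient.mk m b := by
      rw [Polynomial.leadingCoeff, hfdeg]
      simp [hφ, Polynomial.coeff_map, hb]
    have hbm : b ∉ m := by
      intro h
      apply hfne
      rw [← Polynomial.leadingCoeff_eq_zero, hlead, Ideal.Quotient.eq_zero_iff_mem]
      exact h
    have hbM : (C b : R[X]) ∉ M := fun h => hbm (by rw [hm]; exact Ideal.mem_comap.mpr h)
    have hlt : M < M ⊔ Ideal.span {(C b : R[X])} := lt_of_le_of_ne le_sup_left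
      (fun hEq => hbM (hEq ▸ Ideal.mem_sup_right (Ideal.mem_span_singleton_self _)))
    obtain ⟨B, hBfg, hBrad⟩ := hgood _ hlt
    obtain ⟨u, hu⟩ := hBfg
    have hup : ∀ x ∈ (u : Set R[X]), ∃ w ∈ M, ∃ t : R[X], ∃ n : ℕ,
        x ^ n = w + t * C b := by
      intro x hx
      have hxB : x ∈ B.radical := hu ▸ Ideal.le_radical (Ideal.subset_span hx)
      rw [hBrad] at hxB
      obtain ⟨n, hn⟩ := hxB
      obtain ⟨w, hw, r, hr, hxn⟩ := Submodule.mem_sup.mp hn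
      obtain ⟨t, rfl⟩ := Ideal.mem_span_singleton'.mp hr
      exact ⟨w, hw, t, n, hxn.symm⟩
    choose! w hwM t nn hpow using hup
    set I : Ideal R[X] := ((A.map (C : R →+* R[X])) ⊔ Ideal.span {f})
      ⊔ Ideal.span (w '' (u : Set R[X])) with hI
    have hIfg : I.FG := by
      refine Submodule.FG.sup (Submodule.FG.sup (hAfg.map _) ⟨{f}, by simp⟩) ?_
      exact Submodule.fg_span (u.finite_toSet.image w)
    have hfI : f ∈ I := Ideal.mem_sup_left (Ideal.mem_sup_right (Ideal.mem_span_singleton_self f))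
    have hIM : I ≤ M := by
      refine sup_le (sup_le hAleM ?_) ?_
      · rw [Ideal.span_le, Set.singleton_subset_iff]; exact hfM
      · rw [Ideal.span_le]
        rintro _ ⟨x, hx, rfl⟩
        exact hwM x hx
    apply hMS I hIfg
    apply le_antisymm (Ideal.radical_mono hIM)
    have hMle : M ≤ I.radical := by
      rw [Ideal.radical_eq_sInf]
      refine le_sInf ?_
      rintro T' ⟨hIT, hTprime⟩
      by_cases hbT : (C b : R[X]) ∈ T'
      · have hBT : B ≤ T' := by
          rw [← hu, Ideal.span_le]
          intro x hx
          refine hTprime.mem_of_pow_mem (nn x) ?_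
          rw [hpow x hx]
          exact add_mem (hIT (Ideal.mem_sup_right (Ideal.subset_span ⟨x, hx, rfl⟩)))
            (T'.mul_mem_left _ hbT)
        calc M ≤ (M ⊔ Ideal.span {(C b : R[X])}).radical :=
              le_trans le_sup_left Ideal.le_radical
          _ = B.radical := hBrad.symm
          _ ≤ T'.radical := Ideal.radical_mono hBT
          _ = T' := hTprime.radical
      · have hmT : Ideal.map (C : R →+* R[X]) m ≤ T' := by
          rw [Ideal.map_le_iff_le_comap]
          have hA : A ≤ T'.comap (C : R →+* R[X]) := by
            rw [← Ideal.map_le_iff_le_comap]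
            exact le_trans (le_trans le_sup_left le_sup_left) hIT
          calc m = A.radical := hAm.symm
            _ ≤ (T'.comap (C : R →+* R[X])).radical := Ideal.radical_mono hA
            _ = _ := (hTprime.comap _).radical
        intro g hgM
        have hfT : f ∈ T' := hIT hfI
        obtain ⟨s, qb, r, heq, hdr⟩ := pseudoDiv (φ f) hfne (φ g)
        obtain ⟨q, hq⟩ := hφsurj qb
        set r' : R[X] := C b ^ s * g - f * q with hr'
        have hCb : φ (C b) = Polynomial.C (Ideal.Quotient.mk m b) := by simp [hφ]
        have hφr : φ r' = r := by
          have h3 : φ r' = Polynomial.C ((φ f).leadingCoeff) ^ s * φ g - φ f * qb := by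
            rw [hr', map_sub, _root_.map_mul, _root_.map_mul, map_pow, hCb, hq, hlead]
          rw [h3, heq]; ring
        have hr'M : r' ∈ M := sub_mem (M.mul_mem_left _ hgM) (M.mul_mem_right _ hfM)
        have hr0 : φ r' = 0 := by
          by_contra hne
          have h1 : d ≤ (φ r').natDegree := hmin r' hr'M hne
          have h2 : (φ r').natDegree < d := by
            rw [hφr] at hne ⊢
            rw [Polynomial.natDegree_lt_iff_degree_lt hne, ← hfdeg,
              ← Polynomial.degree_eq_natDegree hfne]
            exact hdr
          omega
        have hCbsg : (C b : R[X]) ^ s * g ∈ T' := by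
          have hr'T : r' ∈ T' := hmT ((hker r').mp hr0)
          have h4 : (C b : R[X]) ^ s * g = f * q + r' := by rw [hr']; ring
          rw [h4]
          exact add_mem (T'.mul_mem_right _ hfT) hr'T
        rcases hTprime.mem_or_mem hCbsg with h | h
        · exact absurd (hTprime.mem_of_pow_mem s h) hbT
        · exact h
    calc M.radical ≤ I.radical.radical := Ideal.radical_mono hMle
      _ = I.radical := Ideal.radical_idem _

/-- **Topological Hilbert basis theorem.** If `Spec R` is a Noetherian topological space, then so
is `Spec R[x]`; consequently `Spec R[x_1, ..., x_n]` is Noetherian for every `n`. -/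
theorem primeSpectrum_polynomial_noetherianSpace (R : Type*) [CommRing R]
    (h : TopologicalSpace.NoetherianSpace (PrimeSpectrum R)) :
    TopologicalSpace.NoetherianSpace (PrimeSpectrum (Polynomial R)) ∧
      ∀ n : ℕ, TopologicalSpace.NoetherianSpace
        (PrimeSpectrum (MvPolynomial (Fin n) R)) := by
  have hR : RadFG R := (noetherianSpace_iff_radFG R).mp h
  constructor
  · exact (noetherianSpace_iff_radFG _).mpr (radFG_polynomial hR)
  · intro n
    induction n with
    | zero => exact radFG_of_ringEquiv (MvPolynomial.isEmptyRingEquiv R (Fin 0)).symm h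
    | succ k ih =>
      have h1 : TopologicalSpace.NoetherianSpace
          (PrimeSpectrum (Polynomial (MvPolynomial (Fin k) R))) :=
        (noetherianSpace_iff_radFG _).mpr
          (radFG_polynomial ((noetherianSpace_iff_radFG _).mp ih))
      exact radFG_of_ringEquiv (MvPolynomial.finSuccEquiv R k).toRingEquiv.symm h1
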